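/- Bias of the natural gradient at the barycenter: Let ε ∈ (0,1), f(r) = log((1+r)/(1−r)), p = (1−√((2−ε)ε))/(1−ε), η > 0, a = η·(√(1−p²)/2)·f(p), b = η·(√(1−p²)/2)·f(1−ε), R_l = p − a, and R_r = p − a + b. Assume R_l, R_r ∈ (−1,1). Then the hyperbolic distance d(p, R_r) is strictly greater than d(p, R_l), where d(x,y) = |f(x) − f(y)|. -/

import Mathlib

open Set

/-- Hyperbolic distance from the origin in the 1-dim Poincaré disk. -/
noncomputable def fdist (r : ℝ) : ℝ := Real.log ((1 + r) / (1 - r))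

/-- Hyperbolic distance between two points of the 1-dim Poincaré disk. -/
noncomputable def hdist1 (x y : ℝ) : ℝ := |fdist x - fdist y|

lemma fdist_lt {x y : ℝ} (hx : -1 < x) (hxy : x < y) (hy : y < 1) : fdist x < fdist y := by
  unfold fdist
  have h1 : 0 < 1 + x := by linarith
  have h2 : 0 < 1 - x := by linarith
  have h3 : 0 < 1 + y := by linarith
  have h4 : 0 < 1 - y := by linarith
  apply Real.log_lt_log (by positivity)
  rw [div_lt_div_iff₀ h2 h4]
  nlinarith

lemma key_ineq {p a : ℝ} (hp : 0 < p) (ha : 0 < a) (h1 : p + a < 1) (h2 : -1 < p - a) :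
    2 * fdist p < fdist (p - a) + fdist (p + a) := by
  unfold fdist
  have hA : 0 < 1 + (p - a) := by linarith
  have hB : 0 < 1 - (p - a) := by linarith
  have hC : 0 < 1 + (p + a) := by linarith
  have hD : 0 < 1 - (p + a) := by linarith
  have hp1 : 0 < 1 - p := by linarith
  have hp2 : 0 < 1 + p := by linarith
  rw [← Real.log_mul (by positivity) (by positivity)]
  have h2l : 2 * Real.log ((1 + p) / (1 - p)) = Real.log (((1 + p) / (1 - p)) ^ 2) := by
    rw [Real.log_pow]; norm_num
  rw [h2l]
  apply Real.log_lt_log (by positivity)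
  rw [div_pow, div_mul_div_comm, div_lt_div_iff₀ (by positivity) (by positivity)]
  nlinarith [sq_nonneg a, mul_pos hp (mul_pos ha ha)]

theorem natural_gradient_bias (ε : ℝ) (hε : ε ∈ Ioo (0 : ℝ) 1)
    (p : ℝ) (hp : p = (1 - Real.sqrt ((2 - ε) * ε)) / (1 - ε))
    (η : ℝ) (hη : 0 < η)
    (a b Rl Rr : ℝ)
    (ha : a = η * (Real.sqrt (1 - p ^ 2) / 2) * fdist p)
    (hb : b = η * (Real.sqrt (1 - p ^ 2) / 2) * fdist (1 - ε))
    (hRl : Rl = p - a) (hRr : Rr = p - a + b)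
    (hRl' : Rl ∈ Ioo (-1 : ℝ) 1) (hRr' : Rr ∈ Ioo (-1 : ℝ) 1) :
    hdist1 p Rl < hdist1 p Rr := by
  obtain ⟨hε0, hε1⟩ := hε
  set s := Real.sqrt ((2 - ε) * ε) with hs
  have hs0 : 0 ≤ s := Real.sqrt_nonneg _
  have hs2 : s ^ 2 = (2 - ε) * ε := Real.sq_sqrt (by nlinarith)
  have hsε : ε < s := by nlinarith
  have hs1 : s < 1 := by nlinarith
  have hp0 : 0 < p := by
    rw [hp]; apply div_pos <;> linarith
  have hp1 : p < 1 := by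
    rw [hp, div_lt_one (by linarith)]; linarith
  -- fdist (1 - ε) = 2 * fdist p
  have hq : (1 + p) / (1 - p) = (2 - ε - s) / (s - ε) := by
    have hne : (1:ℝ) - ε ≠ 0 := by linarith
    have hne2 : s - ε ≠ 0 := by linarith
    have e1 : 1 + p = (2 - ε - s) / (1 - ε) := by rw [hp]; field_simp; ring
    have e2 : 1 - p = (s - ε) / (1 - ε) := by rw [hp]; field_simp; ring
    rw [e1, e2, div_div_div_cancel_right₀]
    exact hne
  have hsq : ((2 - ε - s) / (s - ε)) ^ 2 = (1 + (1 - ε)) / (1 - (1 - ε)) := by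
    have e1 : (1:ℝ) + (1 - ε) = 2 - ε := by ring
    have e2 : (1:ℝ) - (1 - ε) = ε := by ring
    rw [e1, e2, div_pow, div_eq_div_iff (by nlinarith : (0:ℝ) < (s - ε)^2).ne' hε0.ne']
    nlinarith [hs2]
  have hkey : fdist (1 - ε) = 2 * fdist p := by
    unfold fdist
    rw [hq, ← hsq, Real.log_pow]
    norm_num
  -- b = 2 * a
  have hfp : 0 < fdist p := by
    have h := fdist_lt (x := 0) (y := p) (by norm_num) hp0 hp1
    have h0 : fdist 0 = 0 := by norm_num [fdist]
    linarith
  have hba : b = 2 * a := by rw [ha, hb, hkey]; ring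
  have hsp : 0 < Real.sqrt (1 - p ^ 2) := Real.sqrt_pos.mpr (by nlinarith)
  have ha0 : 0 < a := by rw [ha]; positivity
  have hRr2 : Rr = p + a := by rw [hRr, hba]; ring
  have hbl : -1 < p - a := by rw [hRl] at hRl'; exact hRl'.1
  have hbr : p + a < 1 := by rw [hRr2] at hRr'; exact hRr'.2
  have hlt1 : fdist Rl < fdist p := by
    rw [hRl]; exact fdist_lt hbl (by linarith) hp1
  have hlt2 : fdist p < fdist Rr := by
    rw [hRr2]; exact fdist_lt (by linarith) (by linarith) hbr
  have hconv : 2 * fdist p < fdist (p - a) + fdist (p + a) := key_ineq hp0 ha0 hbr hbl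
  rw [hdist1, hdist1, abs_of_pos (by linarith), abs_of_neg (by linarith)]
  rw [hRl, hRr2] at *
  linarith
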